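/- Let (A, \mu, \alpha) be a multiplicative Hom-associative algebra, t_n the signed cyclic operator on A^{\otimes n+1}, N = Id + t_n + ... + t_n^n, b the Hom-Hochschild boundary and b' its truncation (without the last face). Then b' N = N b. -/

import Mathlib

/-- The space of Hochschild chains of degree `n` of `A` (the free vector space on the
elementary tensors of `A^{⊗(n+1)}`). -/
abbrev HChain (k A : Type*) [Semiring k] (n : ℕ) := (Fin (n + 1) → A) →₀ k

/-- The cyclic permutation `(a_0, …, a_n) ↦ (a_n, a_0, …, a_{n-1})`. -/
def cycTuple {A : Type*} (n : ℕ) (a : Fin (n + 1) → A) : Fin (n + 1) → A :=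
  fun j => a (j - 1)

/-- The `i`-th Hochschild face `A^{⊗(n+2)} → A^{⊗(n+1)}` on elementary tensors, twisted
by `γ` and with product `m`. -/
def cFace {A : Type*} (γ : A → A) (m : A → A → A) (n : ℕ) (i : Fin (n + 2))
    (a : Fin (n + 2) → A) : Fin (n + 1) → A :=
  if (i : ℕ) = n + 1 then
    fun j => if (j : ℕ) = 0 then m (a (Fin.last (n + 1))) (a 0) else γ (a j.castSucc)
  else fun j =>
    if (j : ℕ) < (i : ℕ) then γ (a j.castSucc)
    else if (j : ℕ) = (i : ℕ) then m (a j.castSucc) (a j.succ)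
    else γ (a j.succ)

section Aux

open Fin.NatCast

lemma sub_one_val {N : ℕ} (x : Fin (N + 1)) :
    ((x - 1 : Fin (N + 1)) : ℕ) = if (x : ℕ) = 0 then N else (x : ℕ) - 1 := by
  rcases eq_or_ne x 0 with h | h
  · subst h; simp
  · have hx : (x : ℕ) ≠ 0 := fun hh => h (Fin.ext hh)
    rw [Fin.coe_sub_one, if_neg h, if_neg hx]

variable {A : Type*} (γ : A → A) (m : A → A → A) (n : ℕ)

lemma cFace_last (a : Fin (n + 2) → A) (j : Fin (n + 1)) :
    cFace γ m n (Fin.last (n + 1)) a j =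
      if (j : ℕ) = 0 then m (a (Fin.last (n + 1))) (a 0) else γ (a j.castSucc) := by
  rw [cFace, if_pos (by simp)]

lemma cFace_of_ne (i : Fin (n + 2)) (hi : (i : ℕ) ≠ n + 1) (a : Fin (n + 2) → A)
    (j : Fin (n + 1)) :
    cFace γ m n i a j =
      if (j : ℕ) < (i : ℕ) then γ (a j.castSucc)
      else if (j : ℕ) = (i : ℕ) then m (a j.castSucc) (a j.succ)
      else γ (a j.succ) := by
  rw [cFace, if_neg hi]

lemma cFace_zero_cyc (a : Fin (n + 2) → A) :
    cFace γ m n 0 (cycTuple (n + 1) a) = cFace γ m n (Fin.last (n + 1)) a := by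
  funext j
  rw [cFace_of_ne γ m n 0 (by simp) _ j, cFace_last γ m n a j]
  simp only [cycTuple, Fin.val_zero, Nat.not_lt_zero, if_false]
  rcases eq_or_ne (j : ℕ) 0 with hj | hj
  · simp only [hj, eq_self_iff_true, if_true]
    refine congrArg₂ m (congrArg a (Fin.ext ?_)) (congrArg a (Fin.ext ?_))
    · rw [sub_one_val]; simp [Fin.coe_castSucc, Fin.val_last, hj]
    · rw [sub_one_val]; simp [Fin.val_succ, hj]
  · simp only [hj, if_false]
    refine congrArg γ (congrArg a (Fin.ext ?_))
    rw [sub_one_val]; simp [Fin.val_succ, Fin.coe_castSucc]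

lemma cFace_cyc (c : Fin (n + 2)) (hc : c ≠ 0) (a : Fin (n + 2) → A) :
    cFace γ m n c (cycTuple (n + 1) a) = cycTuple n (cFace γ m n (c - 1) a) := by
  have hc1 : (c : ℕ) ≠ 0 := fun h => hc (Fin.ext h)
  have hcv : ((c - 1 : Fin (n + 2)) : ℕ) = (c : ℕ) - 1 := by
    rw [sub_one_val, if_neg hc1]
  funext j
  rcases eq_or_ne (c : ℕ) (n + 1) with hc2 | hc2
  · -- c = last
    have hclast : c = Fin.last (n + 1) := Fin.ext (by simp [Fin.val_last, hc2])
    subst hclast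
    rw [cFace_last γ m n _ j]
    simp only [cycTuple]
    rw [cFace_of_ne γ m n _ (by rw [hcv]; simp [Fin.val_last]) a (j - 1)]
    rw [hcv]
    simp only [Fin.val_last, Nat.add_sub_cancel]
    rcases eq_or_ne (j : ℕ) 0 with hj | hj
    · have hjv : ((j - 1 : Fin (n + 1)) : ℕ) = n := by rw [sub_one_val, if_pos hj]
      rw [if_pos hj, if_neg (by omega), if_pos hjv]
      exact congrArg₂ m
        (congrArg a (Fin.ext (by rw [sub_one_val]; simp [Fin.val_last, Fin.coe_castSucc, hjv])))
        (congrArg a (Fin.ext (by rw [sub_one_val]; simp [Fin.val_succ, hjv])))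
    · have hjv : ((j - 1 : Fin (n + 1)) : ℕ) = (j : ℕ) - 1 := by rw [sub_one_val, if_neg hj]
      have hjn : (j : ℕ) ≤ n := by omega
      rw [if_neg hj, if_pos (by omega)]
      exact congrArg γ (congrArg a (Fin.ext (by
        rw [sub_one_val]; simp [Fin.coe_castSucc, hjv, hj])))
  · -- c ≤ n
    have hcn : (c : ℕ) ≤ n := by omega
    rw [cFace_of_ne γ m n c hc2 _ j]
    simp only [cycTuple]
    rw [cFace_of_ne γ m n _ (by rw [hcv]; omega) a (j - 1)]
    rw [hcv]
    rcases eq_or_ne (j : ℕ) 0 with hj | hj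
    · have hjv : ((j - 1 : Fin (n + 1)) : ℕ) = n := by rw [sub_one_val, if_pos hj]
      rw [if_pos (by omega), if_neg (by omega), if_neg (by omega)]
      exact congrArg γ (congrArg a (Fin.ext (by
        rw [sub_one_val]; simp [Fin.val_succ, Fin.coe_castSucc, hjv, hj])))
    · have hjv : ((j - 1 : Fin (n + 1)) : ℕ) = (j : ℕ) - 1 := by rw [sub_one_val, if_neg hj]
      rcases Nat.lt_trichotomy (j : ℕ) (c : ℕ) with h | h | h
      · rw [if_pos h, if_pos (by omega)]
        exact congrArg γ (congrArg a (Fin.ext (by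
          rw [sub_one_val]; simp [Fin.coe_castSucc, hjv, hj])))
      · rw [if_neg (by omega), if_pos h, if_neg (by omega), if_pos (by omega)]
        exact congrArg₂ m
          (congrArg a (Fin.ext (by rw [sub_one_val]; simp [Fin.coe_castSucc, hjv, hj])))
          (congrArg a (Fin.ext (by rw [sub_one_val]; simp [Fin.val_succ, hjv, hj]; omega)))
      · rw [if_neg (by omega), if_neg (by omega), if_neg (by omega), if_neg (by omega)]
        exact congrArg γ (congrArg a (Fin.ext (by
          rw [sub_one_val]; simp [Fin.val_succ, hjv, hj]; omega)))

end Aux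

section Ops

variable (k : Type*) {A : Type*} [Field k] (γ : A → A) (mm : A → A → A)

noncomputable def TcOp (md : ℕ) : Module.End k (HChain k A md) :=
  (Finsupp.lift (HChain k A md) k (Fin (md + 1) → A))
    (fun a => ((-1 : k) ^ md) • Finsupp.single (cycTuple md a) (1 : k))

variable (n : ℕ)

noncomputable def DcOp (i : Fin (n + 2)) : HChain k A (n + 1) →ₗ[k] HChain k A n :=
  (Finsupp.lift (HChain k A n) k (Fin (n + 2) → A))
    (fun a => ((-1 : k) ^ (i : ℕ)) • Finsupp.single (cFace γ mm n i a) (1 : k))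

lemma Top_single (md : ℕ) (a : Fin (md + 1) → A) :
    TcOp k (A := A) md (Finsupp.single a (1 : k))
      = ((-1 : k) ^ md) • Finsupp.single (cycTuple md a) (1 : k) := by
  rw [TcOp, Finsupp.lift_apply, Finsupp.sum_single_index (by simp), one_smul]

lemma Dop_single (i : Fin (n + 2)) (a : Fin (n + 2) → A) :
    DcOp k γ mm n i (Finsupp.single a (1 : k))
      = ((-1 : k) ^ (i : ℕ)) • Finsupp.single (cFace γ mm n i a) (1 : k) := by
  rw [DcOp, Finsupp.lift_apply, Finsupp.sum_single_index (by simp), one_smul]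

lemma Dop_comp_Top (c : Fin (n + 2)) (hc : c ≠ 0) :
    DcOp k γ mm n c ∘ₗ (TcOp k (n + 1) : Module.End k (HChain k A (n + 1)))
      = (TcOp k n : Module.End k (HChain k A n)) ∘ₗ DcOp k γ mm n (c - 1) := by
  have hc1 : (c : ℕ) ≠ 0 := fun h => hc (Fin.ext h)
  have hcv : ((c - 1 : Fin (n + 2)) : ℕ) = (c : ℕ) - 1 := by
    rw [sub_one_val, if_neg hc1]
  apply Finsupp.lhom_ext
  intro a bc
  have hb : Finsupp.single a bc = bc • Finsupp.single a (1 : k) := by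
    rw [Finsupp.smul_single, smul_eq_mul, mul_one]
  rw [LinearMap.comp_apply, LinearMap.comp_apply, hb, map_smul, map_smul, map_smul, map_smul]
  congr 1
  rw [Top_single, map_smul, Dop_single, Dop_single, map_smul, Top_single,
    cFace_cyc γ mm n c hc a, smul_smul, smul_smul]
  congr 1
  rw [hcv]
  obtain ⟨d, hd⟩ : ∃ d, (c : ℕ) = d + 1 := ⟨(c : ℕ) - 1, by omega⟩
  rw [hd]
  simp only [Nat.add_sub_cancel, pow_succ]
  ring

lemma Dop_zero_comp_Top :
    DcOp k γ mm n 0 ∘ₗ (TcOp k (n + 1) : Module.End k (HChain k A (n + 1)))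
      = DcOp k γ mm n (Fin.last (n + 1)) := by
  apply Finsupp.lhom_ext
  intro a bc
  have hb : Finsupp.single a bc = bc • Finsupp.single a (1 : k) := by
    rw [Finsupp.smul_single, smul_eq_mul, mul_one]
  rw [LinearMap.comp_apply, hb, map_smul, map_smul, map_smul]
  congr 1
  rw [Top_single, map_smul, Dop_single, Dop_single, cFace_zero_cyc γ mm n a,
    smul_smul]
  congr 1
  simp [Fin.val_last]

end Ops

section Pow

open Fin.NatCast

variable (k : Type*) {A : Type*} [Field k] (γ : A → A) (mm : A → A → A) (n : ℕ)

lemma DcOp_comp_pow (j : ℕ) (hj : j ≤ n + 1) (i : Fin (n + 2)) :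
    DcOp k γ mm n i ∘ₗ ((TcOp k (n + 1) : Module.End k (HChain k A (n + 1))) ^ j :
        Module.End k (HChain k A (n + 1)))
      = ((TcOp k n : Module.End k (HChain k A n)) ^ (if j ≤ (i : ℕ) then j else j - 1) :
          Module.End k (HChain k A n)) ∘ₗ DcOp k γ mm n (i - (j : Fin (n + 2))) := by
  induction j with
  | zero =>
      simp only [pow_zero, Nat.zero_le, if_pos, Nat.cast_zero, sub_zero,
        Module.End.one_eq_id, LinearMap.comp_id, LinearMap.id_comp]
  | succ j ih =>
      have hj' : j ≤ n + 1 := by omega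
      have hjv : ((j : Fin (n + 2)) : ℕ) = j := by
        rw [Fin.val_natCast]; exact Nat.mod_eq_of_lt (by omega)
      have hcast : ((j + 1 : ℕ) : Fin (n + 2)) = (j : Fin (n + 2)) + 1 := by push_cast; rfl
      rw [pow_succ, Module.End.mul_eq_comp, ← LinearMap.comp_assoc, ih hj',
        LinearMap.comp_assoc]
      by_cases h0 : i - (j : Fin (n + 2)) = 0
      · have hij : (i : ℕ) = j := by
          have h1 : i = (j : Fin (n + 2)) := sub_eq_zero.mp h0
          rw [h1, hjv]
        rw [h0, Dop_zero_comp_Top]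
        have hidx : i - ((j + 1 : ℕ) : Fin (n + 2)) = Fin.last (n + 1) := by
          rw [hcast, ← sub_sub, h0]
          apply Fin.ext
          rw [sub_one_val]
          simp [Fin.val_last]
        rw [hidx, if_pos (by omega : j ≤ (i : ℕ)), if_neg (by omega : ¬ j + 1 ≤ (i : ℕ)),
          Nat.add_sub_cancel]
      · have hij : (i : ℕ) ≠ j := by
          intro h
          exact h0 (sub_eq_zero.mpr (Fin.ext (by rw [hjv, h])))
        rw [Dop_comp_Top k γ mm n _ h0, ← LinearMap.comp_assoc,
          ← Module.End.mul_eq_comp, ← pow_succ]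
        have he : (if j ≤ (i : ℕ) then j else j - 1) + 1
            = if j + 1 ≤ (i : ℕ) then j + 1 else j + 1 - 1 := by
          split_ifs <;> omega
        have hidx : i - (j : Fin (n + 2)) - 1 = i - ((j + 1 : ℕ) : Fin (n + 2)) := by
          rw [hcast, sub_sub]
        rw [he, hidx]

end Pow

section Final

lemma sum_comp_left {R M₁ M₂ M₃ : Type*} [Semiring R] [AddCommMonoid M₁] [AddCommMonoid M₂]
    [AddCommMonoid M₃] [Module R M₁] [Module R M₂] [Module R M₃] {ι : Type*} (s : Finset ι)
    (f : ι → (M₂ →ₗ[R] M₃)) (g : M₁ →ₗ[R] M₂) :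
    (∑ i ∈ s, f i) ∘ₗ g = ∑ i ∈ s, f i ∘ₗ g := by
  ext x; simp [LinearMap.sum_apply]

lemma comp_sum_right {R M₁ M₂ M₃ : Type*} [Semiring R] [AddCommMonoid M₁] [AddCommMonoid M₂]
    [AddCommMonoid M₃] [Module R M₁] [Module R M₂] [Module R M₃] {ι : Type*} (s : Finset ι)
    (g : M₂ →ₗ[R] M₃) (f : ι → (M₁ →ₗ[R] M₂)) :
    g ∘ₗ (∑ i ∈ s, f i) = ∑ i ∈ s, g ∘ₗ f i := by
  ext x; simp [LinearMap.sum_apply, map_sum]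

end Final


/-- For a multiplicative Hom-associative algebra `A`, with `t` the signed cyclic
operator, `N = Id + t + … + tⁿ` the norm operator, `b` the Hom-Hochschild boundary and
`b'` its truncation, one has `b' N = N b`. -/
theorem stmt_15 {k A : Type*} [Field k] [NonUnitalNonAssocRing A] [Module k A]
    [SMulCommClass k A A] [IsScalarTower k A A]
    (α : A →ₗ[k] A)
    (hassoc : ∀ a b c : A, α a * (b * c) = (a * b) * α c)
    (hmul : ∀ a b : A, α (a * b) = α a * α b)
    (n : ℕ)
    (T : (m : ℕ) → Module.End k (HChain k A m))
    (hT : ∀ m : ℕ, T m = (Finsupp.lift (HChain k A m) k (Fin (m + 1) → A))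
      (fun a => ((-1 : k) ^ m) • Finsupp.single (cycTuple m a) (1 : k)))
    (N : (m : ℕ) → Module.End k (HChain k A m))
    (hN : ∀ m : ℕ, N m = ∑ i ∈ Finset.range (m + 1), (T m) ^ i)
    (b : HChain k A (n + 1) →ₗ[k] HChain k A n)
    (hb : b = (Finsupp.lift (HChain k A n) k (Fin (n + 2) → A))
      (fun a => ∑ i : Fin (n + 2), ((-1 : k) ^ (i : ℕ)) •
        Finsupp.single (cFace (⇑α) (· * ·) n i a) (1 : k)))
    (b' : HChain k A (n + 1) →ₗ[k] HChain k A n)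
    (hb' : b' = (Finsupp.lift (HChain k A n) k (Fin (n + 2) → A))
      (fun a => ∑ i : Fin (n + 1), ((-1 : k) ^ (i : ℕ)) •
        Finsupp.single (cFace (⇑α) (· * ·) n i.castSucc a) (1 : k))) :
    b' ∘ₗ (N (n + 1) : HChain k A (n + 1) →ₗ[k] HChain k A (n + 1))
      = (N n : HChain k A n →ₗ[k] HChain k A n) ∘ₗ b := by
  open Fin.NatCast in
  have hTT : ∀ m : ℕ, T m = TcOp k (A := A) m := fun m => by rw [hT m]; rfl
  -- b as sum of face operators
  have hbD : b = ∑ q : Fin (n + 2), DcOp k (⇑α) (· * ·) n q := by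
    rw [hb]
    apply Finsupp.lhom_ext
    intro a bc
    simp [DcOp, Finsupp.lift_apply, Finsupp.sum_single_index, LinearMap.sum_apply,
      Finset.smul_sum]
  have hbD' : b' = ∑ i : Fin (n + 1), DcOp k (⇑α) (· * ·) n i.castSucc := by
    rw [hb']
    apply Finsupp.lhom_ext
    intro a bc
    simp [DcOp, Finsupp.lift_apply, Finsupp.sum_single_index, LinearMap.sum_apply,
      Finset.smul_sum]
  rw [hbD, hbD', hN, hN, hTT (n + 1), hTT n]
  conv_lhs => rw [comp_sum_right]
  conv_rhs => rw [sum_comp_left]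
  -- turn Fin sums into range sums
  have hL : ∀ j : ℕ, (∑ i : Fin (n + 1), DcOp k (⇑α) (· * ·) n i.castSucc) ∘ₗ
      ((TcOp k (n + 1) : Module.End k (HChain k A (n + 1))) ^ j)
      = ∑ i ∈ Finset.range (n + 1),
          DcOp k (⇑α) (· * ·) n ((i : ℕ) : Fin (n + 2)) ∘ₗ
            ((TcOp k (n + 1) : Module.End k (HChain k A (n + 1))) ^ j) := by
    intro j
    rw [sum_comp_left]
    rw [← Fin.sum_univ_eq_sum_range (fun i =>
      DcOp k (⇑α) (· * ·) n ((i : ℕ) : Fin (n + 2)) ∘ₗ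
        ((TcOp k (n + 1) : Module.End k (HChain k A (n + 1))) ^ j)) (n + 1)]
    apply Finset.sum_congr rfl
    intro i _
    congr 1
    congr 1
    apply Fin.ext
    rw [Fin.val_natCast, Nat.mod_eq_of_lt (by omega)]
    rfl
  have hR : ∀ p : ℕ, ((TcOp k n : Module.End k (HChain k A n)) ^ p) ∘ₗ
      ∑ q : Fin (n + 2), DcOp k (⇑α) (· * ·) n q
      = ∑ q ∈ Finset.range (n + 2),
          ((TcOp k n : Module.End k (HChain k A n)) ^ p) ∘ₗ
            DcOp k (⇑α) (· * ·) n ((q : ℕ) : Fin (n + 2)) := by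
    intro p
    rw [comp_sum_right]
    rw [← Fin.sum_univ_eq_sum_range (fun q =>
      ((TcOp k n : Module.End k (HChain k A n)) ^ p) ∘ₗ
        DcOp k (⇑α) (· * ·) n ((q : ℕ) : Fin (n + 2))) (n + 2)]
    apply Finset.sum_congr rfl
    intro q _
    congr 1
    congr 1
    exact (Fin.cast_val_eq_self q).symm
  simp only [hL, hR]
  rw [← Finset.sum_product' (s := Finset.range (n + 1 + 1)) (t := Finset.range (n + 1))
    (f := fun j i => DcOp k (⇑α) (· * ·) n ((i : ℕ) : Fin (n + 2)) ∘ₗ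
      ((TcOp k (n + 1) : Module.End k (HChain k A (n + 1))) ^ j))]
  rw [← Finset.sum_product' (s := Finset.range (n + 1)) (t := Finset.range (n + 2))
    (f := fun p q => ((TcOp k n : Module.End k (HChain k A n)) ^ p) ∘ₗ
      DcOp k (⇑α) (· * ·) n ((q : ℕ) : Fin (n + 2)))]
  apply Finset.sum_nbij'
    (i := fun x => if x.1 ≤ x.2 then (x.1, x.2 - x.1) else (x.1 - 1, n + 2 + x.2 - x.1))
    (j := fun y => if y.1 + y.2 ≤ n then (y.1, y.1 + y.2) else (y.1 + 1, y.1 + y.2 - (n + 1)))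
  · rintro ⟨j, i⟩ hx
    rw [Finset.mem_product, Finset.mem_range, Finset.mem_range] at hx
    obtain ⟨hj, hi⟩ := hx
    by_cases h : j ≤ i
    · rw [if_pos h, Finset.mem_product]
      exact ⟨Finset.mem_range.mpr (by omega), Finset.mem_range.mpr (by omega)⟩
    · rw [if_neg h, Finset.mem_product]
      exact ⟨Finset.mem_range.mpr (by omega), Finset.mem_range.mpr (by omega)⟩
  · rintro ⟨p, q⟩ hy
    rw [Finset.mem_product, Finset.mem_range, Finset.mem_range] at hy
    obtain ⟨hp, hq⟩ := hy
    by_cases h : p + q ≤ n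
    · rw [if_pos h, Finset.mem_product]
      exact ⟨Finset.mem_range.mpr (by omega), Finset.mem_range.mpr (by omega)⟩
    · rw [if_neg h, Finset.mem_product]
      exact ⟨Finset.mem_range.mpr (by omega), Finset.mem_range.mpr (by omega)⟩
  · rintro ⟨j, i⟩ hx
    rw [Finset.mem_product, Finset.mem_range, Finset.mem_range] at hx
    obtain ⟨hj, hi⟩ := hx
    by_cases h : j ≤ i
    · rw [if_pos h]
      show (if j + (i - j) ≤ n then _ else _) = _
      rw [if_pos (by omega : j + (i - j) ≤ n)]
      rw [Prod.mk.injEq]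
      exact ⟨rfl, by omega⟩
    · rw [if_neg h]
      show (if (j - 1) + (n + 2 + i - j) ≤ n then _ else _) = _
      rw [if_neg (by omega : ¬ (j - 1) + (n + 2 + i - j) ≤ n)]
      rw [Prod.mk.injEq]
      exact ⟨by omega, by omega⟩
  · rintro ⟨p, q⟩ hy
    rw [Finset.mem_product, Finset.mem_range, Finset.mem_range] at hy
    obtain ⟨hp, hq⟩ := hy
    by_cases h : p + q ≤ n
    · rw [if_pos h]
      show (if p ≤ p + q then _ else _) = _
      rw [if_pos (by omega : p ≤ p + q)]
      rw [Prod.mk.injEq]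
      exact ⟨rfl, by omega⟩
    · rw [if_neg h]
      show (if p + 1 ≤ p + q - (n + 1) then _ else _) = _
      rw [if_neg (by omega : ¬ p + 1 ≤ p + q - (n + 1))]
      rw [Prod.mk.injEq]
      exact ⟨by omega, by omega⟩
  · rintro ⟨j, i⟩ hx
    rw [Finset.mem_product, Finset.mem_range, Finset.mem_range] at hx
    obtain ⟨hj, hi⟩ := hx
    have hiv : (((i : ℕ) : Fin (n + 2)) : ℕ) = i := by
      rw [Fin.val_natCast]; exact Nat.mod_eq_of_lt (by omega)
    have hjv : (((j : ℕ) : Fin (n + 2)) : ℕ) = j := by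
      rw [Fin.val_natCast]; exact Nat.mod_eq_of_lt (by omega)
    rw [DcOp_comp_pow k (⇑α) (· * ·) n j (by omega) ((i : ℕ) : Fin (n + 2))]
    rw [hiv]
    by_cases h : j ≤ i
    · rw [if_pos h, if_pos h]
      congr 2
      apply Fin.ext
      rw [Fin.sub_def]
      simp only [hiv, hjv]
      simp only [Fin.val_natCast]
      have h1 : n + 2 - j + i = (i - j) + (n + 2) := by omega
      rw [h1, Nat.add_mod_right, Nat.mod_eq_of_lt (by omega)]
    · rw [if_neg h, if_neg h]
      congr 2
      apply Fin.ext
      rw [Fin.sub_def]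
      simp only [hiv, hjv]
      simp only [Fin.val_natCast]
      rw [Nat.mod_eq_of_lt (by omega), Nat.mod_eq_of_lt (by omega)]
      omega
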